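/- Let R^d be a function on pairs of lattice points satisfying: (1) R^d(X+1,Y+1;x,y) − b₁R^d(X,Y+1;x,y) − b₂R^d(X+1,Y;x,y) + (b₁+b₂−1)R^d(X,Y;x,y) = 0; (2) R^d(X+1,Y;x,y)|_{y=Y} = b₁R^d(X,Y;x,y)|_{y=Y} and R^d(X,Y;x−1,y)|_{y=Y} = b₁R^d(X,Y;x,y)|_{y=Y}; (3) the analogous relations in the Y/y variables with b₂; (4) R^d(X,Y;X,Y) = 1; and suppose R^d depends only on the differences X−x and Y−y. Then the function Φ(X,Y) = χ(0)R^d(X,Y;0,0) + Σ_{y=1}^Y R^d(X,Y;0,y)(ψ(y)−b₂ψ(y−1)) + Σ_{x=1}^X R^d(X,Y;x,0)(χ(x)−b₁χ(x−1)) + Σ_{x=1}^X Σ_{y=1}^Y R^d(X,Y;x,y)u(x,y) solves the discrete telegraph equation Φ(X+1,Y+1) − b₁Φ(X,Y+1) − b₂Φ(X+1,Y) + (b₁+b₂−1)Φ(X,Y) = u(X+1,Y+1) with boundary values Φ(X,0)=χ(X), Φ(0,Y)=ψ(Y). -/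

import Mathlib

open Finset

lemma tele_aux (f : ℕ → ℝ) (n : ℕ) :
    ∑ x ∈ Finset.Icc 1 n, (f x - f (x - 1)) = f n - f 0 := by
  induction n with
  | zero => simp
  | succ n ih =>
      rw [Finset.sum_Icc_succ_top (by omega)]
      rw [ih]
      simp only [Nat.add_sub_cancel]
      ring

/-- The discrete Riemann function representation solves the discrete telegraph equation
with the prescribed boundary values. -/
theorem stmt_7 (b1 b2 : ℝ) (hb1 : b1 ∈ Set.Ioo (0:ℝ) 1) (hb2 : b2 ∈ Set.Ioo (0:ℝ) 1)
    (hne : b1 ≠ b2)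
    (Rd : ℤ → ℤ → ℤ → ℤ → ℝ)
    (hdiff : ∀ X Y x y : ℤ, Rd X Y x y = Rd (X - x) (Y - y) 0 0)
    (hR1 : ∀ X Y x y : ℤ,
      Rd (X+1) (Y+1) x y - b1 * Rd X (Y+1) x y - b2 * Rd (X+1) Y x y
        + (b1 + b2 - 1) * Rd X Y x y = 0)
    (hR2a : ∀ X Y x : ℤ, Rd (X+1) Y x Y = b1 * Rd X Y x Y)
    (hR2b : ∀ X Y x : ℤ, Rd X Y (x-1) Y = b1 * Rd X Y x Y)
    (hR3a : ∀ X Y y : ℤ, Rd X (Y+1) X y = b2 * Rd X Y X y)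
    (hR3b : ∀ X Y y : ℤ, Rd X Y X (y-1) = b2 * Rd X Y X y)
    (hR4 : ∀ X Y : ℤ, Rd X Y X Y = 1)
    (u : ℕ → ℕ → ℝ) (χ ψ : ℕ → ℝ) (h0 : χ 0 = ψ 0)
    (Φ : ℕ → ℕ → ℝ)
    (hΦ : ∀ X Y : ℕ, Φ X Y
      = χ 0 * Rd X Y 0 0
        + (∑ y ∈ Finset.Icc 1 Y, Rd X Y 0 y * (ψ y - b2 * ψ (y - 1)))
        + (∑ x ∈ Finset.Icc 1 X, Rd X Y x 0 * (χ x - b1 * χ (x - 1)))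
        + ∑ x ∈ Finset.Icc 1 X, ∑ y ∈ Finset.Icc 1 Y, Rd X Y x y * u x y) :
    (∀ X Y : ℕ,
      Φ (X+1) (Y+1) - b1 * Φ X (Y+1) - b2 * Φ (X+1) Y + (b1 + b2 - 1) * Φ X Y
        = u (X+1) (Y+1))
    ∧ (∀ X : ℕ, Φ X 0 = χ X) ∧ (∀ Y : ℕ, Φ 0 Y = ψ Y) := by
  refine ⟨?_, ?_, ?_⟩
  · -- the telegraph equation
    intro X Y
    rw [hΦ (X+1) (Y+1), hΦ X (Y+1), hΦ (X+1) Y, hΦ X Y]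
    simp only [Finset.sum_Icc_succ_top (show (1:ℕ) ≤ Y + 1 by omega),
      Finset.sum_Icc_succ_top (show (1:ℕ) ≤ X + 1 by omega),
      Finset.sum_add_distrib, Nat.add_sub_cancel]
    push_cast
    have hA : (∑ y ∈ Finset.Icc 1 Y, Rd (↑X+1) (↑Y+1) 0 ↑y * (ψ y - b2 * ψ (y - 1)))
        - b1 * (∑ y ∈ Finset.Icc 1 Y, Rd ↑X (↑Y+1) 0 ↑y * (ψ y - b2 * ψ (y - 1)))
        - b2 * (∑ y ∈ Finset.Icc 1 Y, Rd (↑X+1) ↑Y 0 ↑y * (ψ y - b2 * ψ (y - 1)))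
        + (b1 + b2 - 1) * (∑ y ∈ Finset.Icc 1 Y, Rd ↑X ↑Y 0 ↑y * (ψ y - b2 * ψ (y - 1)))
        = 0 := by
      simp only [Finset.mul_sum, ← Finset.sum_sub_distrib, ← Finset.sum_add_distrib]
      exact Finset.sum_eq_zero fun y _ => by
        linear_combination (ψ y - b2 * ψ (y - 1)) * hR1 ↑X ↑Y 0 ↑y
    have hB : (∑ x ∈ Finset.Icc 1 X, Rd (↑X+1) (↑Y+1) ↑x 0 * (χ x - b1 * χ (x - 1)))
        - b1 * (∑ x ∈ Finset.Icc 1 X, Rd ↑X (↑Y+1) ↑x 0 * (χ x - b1 * χ (x - 1)))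
        - b2 * (∑ x ∈ Finset.Icc 1 X, Rd (↑X+1) ↑Y ↑x 0 * (χ x - b1 * χ (x - 1)))
        + (b1 + b2 - 1) * (∑ x ∈ Finset.Icc 1 X, Rd ↑X ↑Y ↑x 0 * (χ x - b1 * χ (x - 1)))
        = 0 := by
      simp only [Finset.mul_sum, ← Finset.sum_sub_distrib, ← Finset.sum_add_distrib]
      exact Finset.sum_eq_zero fun x _ => by
        linear_combination (χ x - b1 * χ (x - 1)) * hR1 ↑X ↑Y ↑x 0
    have hC : (∑ x ∈ Finset.Icc 1 X, ∑ y ∈ Finset.Icc 1 Y, Rd (↑X+1) (↑Y+1) ↑x ↑y * u x y)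
        - b1 * (∑ x ∈ Finset.Icc 1 X, ∑ y ∈ Finset.Icc 1 Y, Rd ↑X (↑Y+1) ↑x ↑y * u x y)
        - b2 * (∑ x ∈ Finset.Icc 1 X, ∑ y ∈ Finset.Icc 1 Y, Rd (↑X+1) ↑Y ↑x ↑y * u x y)
        + (b1 + b2 - 1) * (∑ x ∈ Finset.Icc 1 X, ∑ y ∈ Finset.Icc 1 Y, Rd ↑X ↑Y ↑x ↑y * u x y)
        = 0 := by
      simp only [Finset.mul_sum, ← Finset.sum_sub_distrib, ← Finset.sum_add_distrib]
      exact Finset.sum_eq_zero fun x _ => Finset.sum_eq_zero fun y _ => by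
        linear_combination (u x y) * hR1 ↑X ↑Y ↑x ↑y
    have hrow : (∑ x ∈ Finset.Icc 1 X, Rd (↑X+1) (↑Y+1) ↑x (↑Y+1) * u x (Y+1))
        - b1 * (∑ x ∈ Finset.Icc 1 X, Rd ↑X (↑Y+1) ↑x (↑Y+1) * u x (Y+1)) = 0 := by
      simp only [Finset.mul_sum, ← Finset.sum_sub_distrib]
      exact Finset.sum_eq_zero fun x _ => by
        linear_combination (u x (Y+1)) * hR2a ↑X (↑Y+1) ↑x
    have hcol : (∑ y ∈ Finset.Icc 1 Y, Rd (↑X+1) (↑Y+1) (↑X+1) ↑y * u (X+1) y)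
        - b2 * (∑ y ∈ Finset.Icc 1 Y, Rd (↑X+1) ↑Y (↑X+1) ↑y * u (X+1) y) = 0 := by
      simp only [Finset.mul_sum, ← Finset.sum_sub_distrib]
      exact Finset.sum_eq_zero fun y _ => by
        linear_combination (u (X+1) y) * hR3a (↑X+1) ↑Y ↑y
    linear_combination (χ 0) * hR1 ↑X ↑Y 0 0 + hA + hB + hC + hrow + hcol
      + (u (X+1) (Y+1)) * hR4 (↑X+1) (↑Y+1)
      + (ψ (Y+1) - b2 * ψ Y) * hR2a ↑X (↑Y+1) 0
      + (χ (X+1) - b1 * χ X) * hR3a (↑X+1) ↑Y 0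
  · -- Φ X 0 = χ X
    intro X
    rw [hΦ X 0]
    have hIcc : Finset.Icc 1 0 = (∅ : Finset ℕ) := by simp
    rw [hIcc]
    simp only [Finset.sum_empty, add_zero, zero_add, Finset.sum_const_zero, Nat.cast_zero]
    have hterm : ∀ x ∈ Finset.Icc 1 X,
        Rd ↑X 0 ↑x 0 * (χ x - b1 * χ (x - 1))
          = Rd ↑X 0 ↑x 0 * χ x - Rd ↑X 0 ↑(x - 1) 0 * χ (x - 1) := by
      intro x hx
      have hx1 : 1 ≤ x := (Finset.mem_Icc.mp hx).1
      have hcast : ((x - 1 : ℕ) : ℤ) = (x : ℤ) - 1 := by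
        push_cast [hx1]; ring
      rw [hcast]
      linear_combination (χ (x - 1)) * hR2b ↑X 0 ↑x
    have htele := tele_aux (fun t : ℕ => Rd ↑X 0 ↑t 0 * χ t) X
    simp only [Nat.cast_zero] at htele
    rw [Finset.sum_congr rfl hterm, htele]
    linear_combination (χ X) * hR4 ↑X 0
  · -- Φ 0 Y = ψ Y
    intro Y
    rw [hΦ 0 Y]
    have hIcc : Finset.Icc 1 0 = (∅ : Finset ℕ) := by simp
    rw [hIcc]
    simp only [Finset.sum_empty, add_zero, zero_add, Finset.sum_const_zero, Nat.cast_zero]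
    have hterm : ∀ y ∈ Finset.Icc 1 Y,
        Rd 0 ↑Y 0 ↑y * (ψ y - b2 * ψ (y - 1))
          = Rd 0 ↑Y 0 ↑y * ψ y - Rd 0 ↑Y 0 ↑(y - 1) * ψ (y - 1) := by
      intro y hy
      have hy1 : 1 ≤ y := (Finset.mem_Icc.mp hy).1
      have hcast : ((y - 1 : ℕ) : ℤ) = (y : ℤ) - 1 := by
        push_cast [hy1]; ring
      rw [hcast]
      linear_combination (ψ (y - 1)) * hR3b 0 ↑Y ↑y
    have htele := tele_aux (fun t : ℕ => Rd 0 ↑Y 0 ↑t * ψ t) Y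
    simp only [Nat.cast_zero] at htele
    rw [Finset.sum_congr rfl hterm, htele]
    linear_combination (ψ Y) * hR4 0 ↑Y + Rd 0 ↑Y 0 0 * h0
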